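/- Let x₁,…,x₆, y₁,…,y₆ ∈ ℝ³ be nonzero vectors, and let F₁, F₂, F₃ be real 3×3 matrices that form a basis of the linear space L = {F ∈ ℝ^{3×3} : yᵢᵀ·F·xᵢ = 0 for all i = 1,…,6}. Then: (1) for every j = 1,…,6, det[F₁·xⱼ | F₂·xⱼ | F₃·xⱼ] = 0 and det[F₁ᵀ·yⱼ | F₂ᵀ·yⱼ | F₃ᵀ·yⱼ] = 0; (2) if a, b ∈ ℝ³ are nonzero and there exists a nonzero real 3×3 matrix F with yᵢᵀ·F·xᵢ = 0 for all i = 1,…,6, F·a = 0, and Fᵀ·b = 0, then det[F₁·a | F₂·a | F₃·a] = 0 and det[F₁ᵀ·b | F₂ᵀ·b | F₃ᵀ·b] = 0. -/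
import Mathlib
set_option maxRecDepth 8000


open Matrix

/-- Determinant of the 3×3 matrix with columns `u`, `v`, `w`. -/
def det3 (u v w : Fin 3 → ℝ) : ℝ := ((Matrix.of ![u, v, w])ᵀ).det

lemma det3_eq_zero_of_rel (u v w c : Fin 3 → ℝ) (hc : c ≠ 0)
    (h : ∀ j, c 0 * u j + c 1 * v j + c 2 * w j = 0) : det3 u v w = 0 := by
  rw [det3]
  refine Matrix.exists_mulVec_eq_zero_iff.mp ⟨c, hc, funext fun j => ?_⟩
  simpa [Matrix.mulVec, dotProduct, Fin.sum_univ_three, mul_comm] using h j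

lemma det3_eq_zero_of_ortho (u v w z : Fin 3 → ℝ) (hz : z ≠ 0)
    (hu : u ⬝ᵥ z = 0) (hv : v ⬝ᵥ z = 0) (hw : w ⬝ᵥ z = 0) : det3 u v w = 0 := by
  rw [det3, Matrix.det_transpose]
  refine Matrix.exists_mulVec_eq_zero_iff.mp ⟨z, hz, funext fun j => ?_⟩
  fin_cases j <;>
    simpa [Matrix.mulVec, dotProduct, Fin.sum_univ_three] using
      (by assumption : _ ⬝ᵥ z = 0)

/-- Concrete form of Theorem 27 (n = 6): the possible camera centers `a`, `b`
for six labeled point pairs lie on the cubic curves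
`det[F₁a | F₂a | F₃a] = 0` and `det[F₁ᵀb | F₂ᵀb | F₃ᵀb] = 0`, where
`F₁, F₂, F₃` is a basis of the space of matrices satisfying the six incidence
constraints; moreover these cubics pass through the six data points. -/
theorem six_points_cubic_curves
    (x y : Fin 6 → Fin 3 → ℝ)
    (hx : ∀ i, x i ≠ 0) (hy : ∀ i, y i ≠ 0)
    (F₁ F₂ F₃ : Matrix (Fin 3) (Fin 3) ℝ)
    (hmem : ∀ i, y i ⬝ᵥ F₁.mulVec (x i) = 0 ∧ y i ⬝ᵥ F₂.mulVec (x i) = 0 ∧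
      y i ⬝ᵥ F₃.mulVec (x i) = 0)
    (hind : LinearIndependent ℝ ![F₁, F₂, F₃])
    (hspan : ∀ F : Matrix (Fin 3) (Fin 3) ℝ,
      (∀ i, y i ⬝ᵥ F.mulVec (x i) = 0) → F ∈ Submodule.span ℝ {F₁, F₂, F₃}) :
    (∀ j, det3 (F₁.mulVec (x j)) (F₂.mulVec (x j)) (F₃.mulVec (x j)) = 0 ∧
          det3 (F₁ᵀ.mulVec (y j)) (F₂ᵀ.mulVec (y j)) (F₃ᵀ.mulVec (y j)) = 0) ∧
    (∀ a b : Fin 3 → ℝ, a ≠ 0 → b ≠ 0 →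
      (∃ F : Matrix (Fin 3) (Fin 3) ℝ, F ≠ 0 ∧
        (∀ i, y i ⬝ᵥ F.mulVec (x i) = 0) ∧ F.mulVec a = 0 ∧ Fᵀ.mulVec b = 0) →
      det3 (F₁.mulVec a) (F₂.mulVec a) (F₃.mulVec a) = 0 ∧
      det3 (F₁ᵀ.mulVec b) (F₂ᵀ.mulVec b) (F₃ᵀ.mulVec b) = 0) := by
  have key : ∀ (M : Matrix (Fin 3) (Fin 3) ℝ) (u v : Fin 3 → ℝ),
      Mᵀ.mulVec v ⬝ᵥ u = v ⬝ᵥ M.mulVec u := by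
    intro M u v
    rw [Matrix.mulVec_transpose, ← Matrix.dotProduct_mulVec]
  constructor
  · intro j
    obtain ⟨h1, h2, h3⟩ := hmem j
    constructor
    · exact det3_eq_zero_of_ortho _ _ _ (y j) (hy j)
        (by rw [dotProduct_comm]; exact h1)
        (by rw [dotProduct_comm]; exact h2)
        (by rw [dotProduct_comm]; exact h3)
    · exact det3_eq_zero_of_ortho _ _ _ (x j) (hx j)
        (by rw [key]; exact h1) (by rw [key]; exact h2) (by rw [key]; exact h3)
  · rintro a b ha hb ⟨F, hF0, hFc, hFa, hFb⟩
    have hsp := hspan F hFc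
    -- get coefficients
    have : ∃ c : Fin 3 → ℝ, F = c 0 • F₁ + c 1 • F₂ + c 2 • F₃ := by
      rw [Submodule.mem_span_insert] at hsp
      obtain ⟨c1, z1, hz1, hFe⟩ := hsp
      rw [Submodule.mem_span_insert] at hz1
      obtain ⟨c2, z2, hz2, hz1e⟩ := hz1
      rw [Submodule.mem_span_singleton] at hz2
      obtain ⟨c3, hz2e⟩ := hz2
      refine ⟨![c1, c2, c3], ?_⟩
      simp only [Matrix.cons_val_zero, Matrix.cons_val_one, Matrix.head_cons,
        Matrix.cons_val_two, Matrix.tail_cons]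
      rw [hFe, hz1e, ← hz2e, add_assoc]
    obtain ⟨c, hFe⟩ := this
    have hc : c ≠ 0 := by
      rintro rfl
      simp only [Pi.zero_apply, zero_smul, add_zero, zero_add] at hFe
      exact hF0 hFe
    constructor
    · refine det3_eq_zero_of_rel _ _ _ c hc fun j => ?_
      have := congrFun hFa j
      rw [hFe] at this
      simpa [Matrix.add_mulVec, Matrix.smul_mulVec] using this
    · refine det3_eq_zero_of_rel _ _ _ c hc fun j => ?_
      have := congrFun hFb j
      rw [hFe] at this
      simpa [Matrix.transpose_add, Matrix.transpose_smul, Matrix.add_mulVec,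
        Matrix.smul_mulVec] using this
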